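/- arXiv:2001.07298 — 2 statements merged into one kernel-verified Lean document; each statement's English description precedes it below -/
import Mathlib

section
/- For integers n ≥ 2 and p ≥ 1 and any permutation S of {1,...,n}, the statistic ν_{n,p}^{(l)}(S) = 1 + 2·Σ_{i=1}^n (i − S(i))(n+1−i)^p / Σ_{i=1}^n (n+1−2i)(n+1−i)^p satisfies −1 ≤ ν_{n,p}^{(l)}(S) ≤ 1. -/
open Finset

/-- The weighted rank statistic ν_{n,p}^{(l)}. -/
noncomputable def nuL (n p : ℕ) (σ : Equiv.Perm ℕ) : ℝ :=
  1 + 2 * (∑ i ∈ Finset.Icc 1 n, ((i : ℝ) - (σ i : ℝ)) * ((n : ℝ) + 1 - i) ^ p) /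
      (∑ i ∈ Finset.Icc 1 n, ((n : ℝ) + 1 - 2 * i) * ((n : ℝ) + 1 - i) ^ p)

lemma rev_invol (n : ℕ) : Function.Involutive
    (fun i => if i ∈ Finset.Icc 1 n then n + 1 - i else i) := by
  intro i
  simp only [Finset.mem_Icc]
  by_cases h : 1 ≤ i ∧ i ≤ n
  · rw [if_pos h, if_pos (by omega)]; omega
  · rw [if_neg h, if_neg h]

/-- The reversal permutation of `Icc 1 n`. -/
def revPerm (n : ℕ) : Equiv.Perm ℕ := Function.Involutive.toPerm _ (rev_invol n)

lemma revPerm_apply (n i : ℕ) (hi : i ∈ Finset.Icc 1 n) : revPerm n i = n + 1 - i := by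
  simp only [revPerm, Function.Involutive.toPerm, Equiv.coe_fn_mk, if_pos hi]

lemma revPerm_fix (n i : ℕ) (hi : i ∉ Finset.Icc 1 n) : revPerm n i = i := by
  simp only [revPerm, Function.Involutive.toPerm, Equiv.coe_fn_mk, if_neg hi]

lemma sum_reflect (n : ℕ) (f : ℕ → ℝ) :
    ∑ i ∈ Finset.Icc 1 n, f i = ∑ i ∈ Finset.Icc 1 n, f (n + 1 - i) := by
  refine Finset.sum_nbij' (fun i => n + 1 - i) (fun i => n + 1 - i) ?_ ?_ ?_ ?_ ?_ <;>
    simp only [Finset.mem_Icc] <;> intro a ha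
  · omega
  · omega
  · omega
  · omega
  · congr 1; omega

theorem stmt_5 (n p : ℕ) (hn : 2 ≤ n) (hp : 1 ≤ p) (σ : Equiv.Perm ℕ)
    (hmem : ∀ i ∈ Finset.Icc 1 n, σ i ∈ Finset.Icc 1 n)
    (hfix : ∀ i, i ∉ Finset.Icc 1 n → σ i = i) :
    -1 ≤ nuL n p σ ∧ nuL n p σ ≤ 1 := by
  set s : Finset ℕ := Finset.Icc 1 n with hs
  set D : ℝ := ∑ i ∈ s, ((n : ℝ) + 1 - 2 * i) * ((n : ℝ) + 1 - i) ^ p with hDdef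
  set N : ℝ := ∑ i ∈ s, ((i : ℝ) - (σ i : ℝ)) * ((n : ℝ) + 1 - i) ^ p with hNdef
  have hσsupp : {x | σ x ≠ x} ⊆ ↑s := by
    intro x hx
    by_contra h
    exact hx (hfix x h)
  -- positivity of D
  have hD : 0 < D := by
    have h2D : D + D = ∑ i ∈ s, (((n : ℝ) + 1 - 2 * i) * ((n : ℝ) + 1 - i) ^ p
        + ((2 * i - ((n : ℝ) + 1)) * (i : ℝ) ^ p)) := by
      rw [Finset.sum_add_distrib]
      congr 1
      rw [hDdef, sum_reflect n (fun i => ((n : ℝ) + 1 - 2 * i) * ((n : ℝ) + 1 - i) ^ p)]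
      apply Finset.sum_congr rfl
      intro i hi
      simp only [hs, Finset.mem_Icc] at hi
      have h1 : ((n + 1 - i : ℕ) : ℝ) = (n : ℝ) + 1 - i := by
        rw [Nat.cast_sub (by omega : i ≤ n + 1)]; push_cast; ring
      rw [h1]
      ring_nf
    have hterm : ∀ i ∈ s, 0 ≤ ((n : ℝ) + 1 - 2 * i) * ((n : ℝ) + 1 - i) ^ p
        + ((2 * i - ((n : ℝ) + 1)) * (i : ℝ) ^ p) := by
      intro i hi
      simp only [hs, Finset.mem_Icc] at hi
      have key : ((n : ℝ) + 1 - 2 * i) * ((n : ℝ) + 1 - i) ^ p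
          + ((2 * i - ((n : ℝ) + 1)) * (i : ℝ) ^ p)
          = ((n : ℝ) + 1 - 2 * i) * (((n : ℝ) + 1 - i) ^ p - (i : ℝ) ^ p) := by ring
      rw [key]
      rcases le_or_gt (2 * i) (n + 1) with h | h
      · apply mul_nonneg
        · have : (2 * (i:ℝ)) ≤ (n : ℝ) + 1 := by exact_mod_cast h
          linarith
        · have : (i : ℝ) ^ p ≤ ((n : ℝ) + 1 - i) ^ p := by
            apply pow_le_pow_left₀ (by positivity)
            have : (i : ℝ) ≤ (n : ℝ) + 1 - i := by
              have : 2 * (i:ℝ) ≤ (n:ℝ) + 1 := by exact_mod_cast h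
              linarith
            linarith
          linarith
      · have ha : ((n : ℝ) + 1 - 2 * i) ≤ 0 := by
          have : ((n : ℝ) + 1) < 2 * i := by exact_mod_cast h
          linarith
        have hpos : (0:ℝ) ≤ (n : ℝ) + 1 - i := by
          have : (i : ℝ) ≤ n := by exact_mod_cast hi.2
          linarith
        have hb : ((n : ℝ) + 1 - i) ^ p - (i : ℝ) ^ p ≤ 0 := by
          have : ((n : ℝ) + 1 - i) ^ p ≤ (i : ℝ) ^ p := by
            apply pow_le_pow_left₀ hpos
            have : ((n : ℝ) + 1) < 2 * i := by exact_mod_cast h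
            linarith
          linarith
        nlinarith [mul_nonneg (neg_nonneg.mpr ha) (neg_nonneg.mpr hb)]
    have hone : (1 : ℕ) ∈ s := by simp [hs]; omega
    have hpos1 : 0 < ((n : ℝ) + 1 - 2 * (1:ℕ)) * ((n : ℝ) + 1 - (1:ℕ)) ^ p
        + ((2 * (1:ℕ) - ((n : ℝ) + 1)) * ((1:ℕ) : ℝ) ^ p) := by
      have hn' : (2 : ℝ) ≤ n := by exact_mod_cast hn
      have hnp : (n : ℝ) ≤ (n : ℝ) ^ p := by
        calc (n : ℝ) = (n : ℝ) ^ 1 := (pow_one _).symm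
        _ ≤ (n : ℝ) ^ p := pow_le_pow_right₀ (by linarith) hp
      push_cast
      have : ((n:ℝ) + 1 - 1) ^ p = (n:ℝ) ^ p := by norm_num
      rw [this]
      simp only [one_pow]
      nlinarith [mul_pos (show (0:ℝ) < (n:ℝ) - 1 by linarith)
        (show (0:ℝ) < (n:ℝ) ^ p - 1 by linarith)]
    have : 0 < D + D := by
      rw [h2D]
      exact Finset.sum_pos' hterm ⟨1, hone, hpos1⟩
    linarith
  -- lower bound on permuted sum
  have hanti : AntivaryOn (fun i : ℕ => (i : ℝ)) (fun i : ℕ => ((n : ℝ) + 1 - i) ^ p) ↑s := by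
    intro i hi j hj hlt
    simp only [hs, Finset.coe_Icc, Set.mem_Icc] at hi hj
    simp only at hlt ⊢
    have hj' : (j : ℝ) ≤ n := by exact_mod_cast hj.2
    have hi' : (i : ℝ) ≤ n := by exact_mod_cast hi.2
    by_contra hcon
    push_neg at hcon
    have : ((n : ℝ) + 1 - j) ^ p ≤ ((n : ℝ) + 1 - i) ^ p := by
      apply pow_le_pow_left₀ (by linarith)
      linarith
    linarith
  have hle1 : ∑ i ∈ s, (i : ℝ) * ((n : ℝ) + 1 - i) ^ p
      ≤ ∑ i ∈ s, (σ i : ℝ) * ((n : ℝ) + 1 - i) ^ p :=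
    hanti.sum_mul_le_sum_comp_perm_mul hσsupp
  -- upper bound on permuted sum
  have hmono : MonovaryOn (fun i : ℕ => (i : ℝ)) (fun i : ℕ => (i : ℝ) ^ p) ↑s := by
    intro i hi j hj hlt
    simp only at hlt ⊢
    by_contra hcon
    push_neg at hcon
    have : (j : ℝ) ^ p ≤ (i : ℝ) ^ p := pow_le_pow_left₀ (by positivity) hcon.le p
    linarith
  have hτsupp : {x | (σ * revPerm n) x ≠ x} ⊆ ↑s := by
    intro x hx
    by_contra h
    apply hx
    simp only [Equiv.Perm.mul_apply]
    rw [revPerm_fix n x h, hfix x h]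
  have hle2' : ∑ i ∈ s, ((σ * revPerm n) i : ℝ) * (i : ℝ) ^ p
      ≤ ∑ i ∈ s, (i : ℝ) * (i : ℝ) ^ p :=
    hmono.sum_comp_perm_mul_le_sum_mul hτsupp
  have hcastrev : ∀ i ∈ s, ((n + 1 - i : ℕ) : ℝ) = (n : ℝ) + 1 - i := by
    intro i hi
    simp only [hs, Finset.mem_Icc] at hi
    push_cast [Nat.cast_sub (by omega : i ≤ n + 1)]
    ring
  have hre1 : ∑ i ∈ s, (σ i : ℝ) * ((n : ℝ) + 1 - i) ^ p
      = ∑ i ∈ s, ((σ * revPerm n) i : ℝ) * (i : ℝ) ^ p := by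
    rw [hs, sum_reflect n (fun i => (σ i : ℝ) * ((n : ℝ) + 1 - i) ^ p)]
    apply Finset.sum_congr rfl
    intro i hi
    have h1 : ((n + 1 - i : ℕ) : ℝ) = (n : ℝ) + 1 - i := hcastrev i hi
    have h2 : (σ * revPerm n) i = σ (n + 1 - i) := by
      rw [Equiv.Perm.mul_apply, revPerm_apply n i hi]
    rw [h2, h1]
    ring_nf
  have hre2 : ∑ i ∈ s, (i : ℝ) * (i : ℝ) ^ p
      = ∑ i ∈ s, ((n : ℝ) + 1 - i) * ((n : ℝ) + 1 - i) ^ p := by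
    rw [hs, sum_reflect n (fun i => (i : ℝ) * (i : ℝ) ^ p)]
    apply Finset.sum_congr rfl
    intro i hi
    rw [hcastrev i hi]
  have hle2 : ∑ i ∈ s, (σ i : ℝ) * ((n : ℝ) + 1 - i) ^ p
      ≤ ∑ i ∈ s, ((n : ℝ) + 1 - i) * ((n : ℝ) + 1 - i) ^ p := by
    rw [hre1, ← hre2]; exact hle2'
  -- relate N and D
  have hNsplit : N = ∑ i ∈ s, (i : ℝ) * ((n : ℝ) + 1 - i) ^ p
      - ∑ i ∈ s, (σ i : ℝ) * ((n : ℝ) + 1 - i) ^ p := by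
    rw [hNdef, ← Finset.sum_sub_distrib]
    apply Finset.sum_congr rfl
    intro i _
    ring
  have hDsplit : D = ∑ i ∈ s, ((n : ℝ) + 1 - i) * ((n : ℝ) + 1 - i) ^ p
      - ∑ i ∈ s, (i : ℝ) * ((n : ℝ) + 1 - i) ^ p := by
    rw [hDdef, ← Finset.sum_sub_distrib]
    apply Finset.sum_congr rfl
    intro i _
    ring
  have hN0 : N ≤ 0 := by rw [hNsplit]; linarith
  have hND : -D ≤ N := by rw [hNsplit, hDsplit]; linarith
  have hnu : nuL n p σ = 1 + 2 * N / D := rfl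
  constructor
  · rw [hnu]
    have : -D ≤ N := hND
    have h1 : (-1 : ℝ) ≤ N / D := by
      rw [le_div_iff₀ hD]
      linarith
    have : 2 * N / D = 2 * (N / D) := by ring
    rw [this]
    linarith
  · rw [hnu]
    have h1 : N / D ≤ 0 := div_nonpos_of_nonpos_of_nonneg hN0 hD.le
    have : 2 * N / D = 2 * (N / D) := by ring
    rw [this]
    linarith
end

section
/- For integer n ≥ 2 and p = 1, the statistic ν_{n,1}^{(l)}(S) = 1 + 2·Σ_{i=1}^n (i − S(i))(n+1−i) / Σ_{i=1}^n (n+1−2i)(n+1−i) equals the Spearman rank correlation ρ_{n,s}(S) = (12/(n³−n))·Σ_{i=1}^n i·S(i) − 3(n+1)/(n−1). -/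
open Finset

/-- Spearman's rank correlation. -/
noncomputable def spearman (n : ℕ) (σ : Equiv.Perm ℕ) : ℝ :=
  (12 / ((n : ℝ) ^ 3 - n)) * (∑ i ∈ Finset.Icc 1 n, (i : ℝ) * (σ i : ℝ))
    - 3 * ((n : ℝ) + 1) / ((n : ℝ) - 1)

lemma sum_Icc_id (n : ℕ) : ∑ i ∈ Finset.Icc 1 n, (i : ℝ) = n * (n + 1) / 2 := by
  induction n with
  | zero => simp
  | succ m ih =>
    rw [Finset.sum_Icc_succ_top (by omega : 1 ≤ m + 1), ih]
    push_cast; ring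

lemma sum_Icc_sq (n : ℕ) : ∑ i ∈ Finset.Icc 1 n, (i : ℝ) ^ 2 = n * (n + 1) * (2 * n + 1) / 6 := by
  induction n with
  | zero => simp
  | succ m ih =>
    rw [Finset.sum_Icc_succ_top (by omega : 1 ≤ m + 1), ih]
    push_cast; ring

theorem stmt_6 (n : ℕ) (hn : 2 ≤ n) (σ : Equiv.Perm ℕ)
    (hmem : ∀ i ∈ Finset.Icc 1 n, σ i ∈ Finset.Icc 1 n)
    (hfix : ∀ i, i ∉ Finset.Icc 1 n → σ i = i) :
    nuL n 1 σ = spearman n σ := by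
  have hiff : ∀ i, i ∈ Finset.Icc 1 n ↔ σ i ∈ Finset.Icc 1 n := by
    intro i
    constructor
    · exact hmem i
    · intro h
      by_contra hi
      rw [hfix i hi] at h
      exact hi h
  have key : ∑ i ∈ Finset.Icc 1 n, ((σ i : ℕ) : ℝ) = ∑ i ∈ Finset.Icc 1 n, (i : ℝ) :=
    Finset.sum_equiv σ hiff (fun i _ => rfl)
  have S1 := sum_Icc_id n
  have S2 := sum_Icc_sq n
  have hcard : ((Finset.Icc 1 n).card : ℝ) = n := by
    simp [Nat.card_Icc]
  have hN : ∑ i ∈ Finset.Icc 1 n, ((i : ℝ) - (σ i : ℝ)) * ((n : ℝ) + 1 - i) ^ 1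
      = (∑ i ∈ Finset.Icc 1 n, (i : ℝ) * (σ i : ℝ)) - n * (n + 1) * (2 * n + 1) / 6 := by
    have h : ∀ i ∈ Finset.Icc 1 n, ((i : ℝ) - (σ i : ℝ)) * ((n : ℝ) + 1 - i) ^ 1
        = (((n : ℝ) + 1) * i - (i : ℝ) ^ 2 - ((n : ℝ) + 1) * (σ i : ℝ)) + (i : ℝ) * (σ i : ℝ) := by
      intro i _; ring
    rw [Finset.sum_congr rfl h, Finset.sum_add_distrib, Finset.sum_sub_distrib,
      Finset.sum_sub_distrib, ← Finset.mul_sum, ← Finset.mul_sum, key, S1, S2]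
    ring
  have hD : ∑ i ∈ Finset.Icc 1 n, ((n : ℝ) + 1 - 2 * i) * ((n : ℝ) + 1 - i) ^ 1
      = ((n : ℝ) ^ 3 - n) / 6 := by
    have h : ∀ i ∈ Finset.Icc 1 n, ((n : ℝ) + 1 - 2 * i) * ((n : ℝ) + 1 - i) ^ 1
        = (((n : ℝ) + 1) ^ 2 - 3 * ((n : ℝ) + 1) * i) + 2 * (i : ℝ) ^ 2 := by
      intro i _; ring
    rw [Finset.sum_congr rfl h, Finset.sum_add_distrib, Finset.sum_sub_distrib,
      ← Finset.mul_sum, ← Finset.mul_sum, Finset.sum_const, nsmul_eq_mul, hcard, S1, S2]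
    ring
  have hn2 : (2 : ℝ) ≤ (n : ℝ) := by exact_mod_cast hn
  have h1 : (n : ℝ) - 1 ≠ 0 := by linarith
  have h2 : (n : ℝ) ≠ 0 := by linarith
  have h3 : (n : ℝ) + 1 ≠ 0 := by linarith
  have h4 : (n : ℝ) ^ 3 - n ≠ 0 := by
    have : (n : ℝ) ^ 3 - n = n * ((n : ℝ) - 1) * ((n : ℝ) + 1) := by ring
    rw [this]; positivity
  unfold nuL spearman
  rw [hN, hD]
  have h5 : (n : ℝ) ^ 2 - 1 ≠ 0 := by nlinarith
  field_simp
  ring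
end
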